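/- Let I_1, …, I_n be independent Bernoulli random variables with P(I_i = 1) = 1/(1 + (i-1)^s), and let N_n = I_1 + ⋯ + I_n. Then for 1 ≤ k ≤ n, P(N_n = k) = S_s(n,k) / ∏_{i=1}^{n} (1 + (i-1)^s). -/

import Mathlib

open MeasureTheory ProbabilityTheory

/-- Stirling numbers of the first kind with level `s`. -/
def Slev (s : ℕ) : ℕ → ℕ → ℕ
  | 0, 0 => 1
  | 0, _ + 1 => 0
  | _ + 1, 0 => 0
  | n + 1, k + 1 => Slev s n k + n ^ s * Slev s n (k + 1)

private lemma ennreal_div_mul_div {a b c d : ENNReal} (hb0 : b ≠ 0) (hbt : b ≠ ⊤) :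
    a / b * (c / d) = a * c / (b * d) := by
  rw [div_eq_mul_inv, div_eq_mul_inv, div_eq_mul_inv, ENNReal.mul_inv (Or.inl hb0) (Or.inl hbt)]
  ring

private lemma iIndepFun_castSucc {Ω : Type*} [MeasurableSpace Ω] {μ : Measure Ω} {n : ℕ}
    {I : Fin (n + 1) → Ω → ℕ} (h : iIndepFun I μ) :
    iIndepFun (fun i : Fin n => I i.castSucc) μ := by
  rw [iIndepFun_iff_measure_inter_preimage_eq_mul] at h ⊢
  intro S sets hsets
  classical
  set sets' : Fin (n + 1) → Set ℕ := Fin.lastCases Set.univ sets with hs'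
  have h1 : ∀ i : Fin n, sets' i.castSucc = sets i := fun i => Fin.lastCases_castSucc i
  have key := h (S.map ⟨Fin.castSucc, Fin.castSucc_injective n⟩) (sets := sets')
    (fun j _ => (Set.to_countable _).measurableSet)
  have he : (⋂ j ∈ S.map ⟨Fin.castSucc, Fin.castSucc_injective n⟩, I j ⁻¹' sets' j)
      = ⋂ i ∈ S, (fun i : Fin n => I i.castSucc) i ⁻¹' sets i := by
    ext ω
    simp only [Set.mem_iInter, Finset.mem_map, Function.Embedding.coeFn_mk]
    constructor
    · intro h' i hi
      have := h' _ ⟨i, hi, rfl⟩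
      rwa [h1] at this
    · rintro h' j ⟨i, hi, rfl⟩
      rw [h1]; exact h' i hi
  rw [he, Finset.prod_map] at key
  rw [key]
  exact Finset.prod_congr rfl fun i _ => by rw [Function.Embedding.coeFn_mk, h1]

private lemma stmt_8_aux (s : ℕ) (hs : 0 < s) {Ω : Type*} [MeasurableSpace Ω] (μ : Measure Ω)
    [IsProbabilityMeasure μ] :
    ∀ (n : ℕ) (I : Fin n → Ω → ℕ), (∀ i, Measurable (I i)) → (∀ i ω, I i ω = 0 ∨ I i ω = 1) →
      iIndepFun I μ →
      (∀ i : Fin n, μ {ω | I i ω = 1} = 1 / (1 + ((i : ℕ) : ENNReal) ^ s)) →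
      ∀ k, μ {ω | ∑ i, I i ω = k} =
        (Slev s n k : ENNReal) / ∏ i ∈ Finset.range n, (1 + (i : ENNReal) ^ s) := by
  intro n
  induction n with
  | zero =>
    intro I _ _ _ _ k
    cases k with
    | zero => simp [Slev]
    | succ k => simp [Slev]
  | succ n ih =>
    intro I hmeas hval hindep hp k
    set J : Fin n → Ω → ℕ := fun i => I i.castSucc with hJ
    have hJmeas : ∀ i, Measurable (J i) := fun i => hmeas _
    have hJval : ∀ i ω, J i ω = 0 ∨ J i ω = 1 := fun i ω => hval _ ω
    have hJindep := iIndepFun_castSucc hindep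
    have hJp : ∀ i : Fin n, μ {ω | J i ω = 1} = 1 / (1 + ((i : ℕ) : ENNReal) ^ s) := by
      intro i
      simpa using hp i.castSucc
    have IH := ih J hJmeas hJval hJindep hJp
    set F : Ω → ℕ := fun ω => ∑ i, J i ω with hF
    have hFmeas : Measurable F := Finset.measurable_sum _ fun i _ => hJmeas i
    set X : ENNReal := ((n : ENNReal)) ^ s with hX
    have hXt : X ≠ ⊤ := by
      rw [hX]
      exact ENNReal.pow_ne_top (ENNReal.natCast_ne_top n)
    have h1X0 : (1 : ENNReal) + X ≠ 0 := by simp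
    have h1Xt : (1 : ENNReal) + X ≠ ⊤ := by
      simp [ENNReal.add_ne_top, hXt]
    set D : ENNReal := ∏ i ∈ Finset.range n, (1 + (i : ENNReal) ^ s) with hD
    have hD0 : D ≠ 0 := by
      rw [hD]
      refine Finset.prod_ne_zero_iff.mpr fun i _ => ?_
      simp
    have hDt : D ≠ ⊤ := by
      rw [hD]
      refine (ENNReal.prod_lt_top fun i _ => ?_).ne
      exact ENNReal.add_lt_top.mpr ⟨ENNReal.one_lt_top,
        (ENNReal.pow_ne_top (ENNReal.natCast_ne_top i)).lt_top⟩
    have hB1 : μ {ω | I (Fin.last n) ω = 1} = 1 / (1 + X) := by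
      simpa [hX] using hp (Fin.last n)
    have hB0 : μ {ω | I (Fin.last n) ω = 0} = X / (1 + X) := by
      have hcompl : {ω | I (Fin.last n) ω = 0} = {ω | I (Fin.last n) ω = 1}ᶜ := by
        ext ω
        rcases hval (Fin.last n) ω with h | h <;> simp [h]
      have hm1 : MeasurableSet {ω | I (Fin.last n) ω = 1} :=
        (hmeas _) (measurableSet_singleton 1)
      rw [hcompl, measure_compl hm1 (measure_ne_top μ _), hB1, measure_univ]
      refine ENNReal.sub_eq_of_eq_add ?_ ?_
      · exact (ENNReal.div_lt_top ENNReal.one_ne_top h1X0).ne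
      · rw [ENNReal.div_add_div_same, add_comm X 1, ENNReal.div_self h1X0 h1Xt]
    have hInd : IndepFun F (I (Fin.last n)) μ := by
      have hnm : Fin.last n ∉ Finset.univ.map ⟨Fin.castSucc, Fin.castSucc_injective n⟩ := by
        simp only [Finset.mem_map, Function.Embedding.coeFn_mk]
        rintro ⟨i, -, hi⟩
        exact absurd hi (Fin.castSucc_lt_last i).ne
      have h2 := hindep.indepFun_finsetSum_of_notMem hmeas hnm
      have hFs : (∑ j ∈ Finset.univ.map ⟨Fin.castSucc, Fin.castSucc_injective n⟩, I j) = F := by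
        funext ω
        rw [Finset.sum_apply, Finset.sum_map, hF]
        rfl
      rwa [hFs] at h2
    have key : ∀ a b : ℕ, μ ({ω | F ω = a} ∩ {ω | I (Fin.last n) ω = b}) =
        μ {ω | F ω = a} * μ {ω | I (Fin.last n) ω = b} := fun a b =>
      hInd.measure_inter_preimage_eq_mul {a} {b} (measurableSet_singleton _)
        (measurableSet_singleton _)
    have hsum : ∀ ω, ∑ i, I i ω = F ω + I (Fin.last n) ω := fun ω =>
      Fin.sum_univ_castSucc (fun i => I i ω)
    cases k with
    | zero =>
      have hE : {ω | ∑ i, I i ω = 0} = {ω | F ω = 0} ∩ {ω | I (Fin.last n) ω = 0} := by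
        ext ω
        simp only [Set.mem_setOf_eq, Set.mem_inter_iff, hsum ω]
        omega
      have hnum : (Slev s n 0 : ENNReal) * X = 0 := by
        have h0 : Slev s n 0 * n ^ s = 0 := by
          cases n <;> simp [Slev, Nat.zero_pow hs, hs.ne']
        rw [hX, show ((n : ENNReal)) ^ s = ((n ^ s : ℕ) : ENNReal) by push_cast; ring,
          ← Nat.cast_mul, h0, Nat.cast_zero]
      rw [hE, key 0 0, IH 0, hB0, ennreal_div_mul_div hD0 hDt, hnum, ENNReal.zero_div]
      simp [Slev]
    | succ m =>
      have hE : {ω | ∑ i, I i ω = m + 1} =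
          ({ω | F ω = m + 1} ∩ {ω | I (Fin.last n) ω = 0}) ∪
          ({ω | F ω = m} ∩ {ω | I (Fin.last n) ω = 1}) := by
        ext ω
        have hv := hval (Fin.last n) ω
        simp only [Set.mem_setOf_eq, Set.mem_union, Set.mem_inter_iff, hsum ω]
        omega
      have hdisj : Disjoint ({ω | F ω = m + 1} ∩ {ω | I (Fin.last n) ω = 0})
          ({ω | F ω = m} ∩ {ω | I (Fin.last n) ω = 1}) := by
        rw [Set.disjoint_left]
        rintro ω ⟨-, h0⟩ ⟨-, h1⟩
        simp only [Set.mem_setOf_eq] at h0 h1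
        omega
      have hm2 : MeasurableSet ({ω | F ω = m} ∩ {ω | I (Fin.last n) ω = 1}) :=
        (hFmeas (measurableSet_singleton m)).inter ((hmeas _) (measurableSet_singleton 1))
      rw [hE, measure_union hdisj hm2, key, key, IH, IH, hB0, hB1,
        ennreal_div_mul_div hD0 hDt, ennreal_div_mul_div hD0 hDt,
        ENNReal.div_add_div_same, Finset.prod_range_succ]
      congr 1
      rw [mul_one, hX, show Slev s (n + 1) (m + 1) = Slev s n m + n ^ s * Slev s n (m + 1) from rfl]
      push_cast
      ring

theorem stmt_8 (s : ℕ) (hs : 0 < s) (n : ℕ)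
    {Ω : Type*} [MeasurableSpace Ω] (μ : Measure Ω) [IsProbabilityMeasure μ]
    (I : Fin n → Ω → ℕ)
    (hmeas : ∀ i, Measurable (I i))
    (hval : ∀ i ω, I i ω = 0 ∨ I i ω = 1)
    (hindep : iIndepFun I μ)
    (hp : ∀ i : Fin n, μ {ω | I i ω = 1} = 1 / (1 + ((i : ℕ) : ENNReal) ^ s))
    (k : ℕ) (hk1 : 1 ≤ k) (hkn : k ≤ n) :
    μ {ω | ∑ i, I i ω = k} =
      (Slev s n k : ENNReal) / ∏ i ∈ Finset.range n, (1 + (i : ENNReal) ^ s) := by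
  exact stmt_8_aux s hs μ n I hmeas hval hindep hp k
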